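/- Let α, τ, L be positive reals with α ≤ L, let m ≥ 1 be a natural number, let μ₀ be a real with 0 < μ₀ ≤ α²/(5mτL²), and let ρ ∈ ℝ satisfy ρ̄ ≤ ρ < 1 where ρ̄ = √(1 − 2mτμ₀ + (5m²τ²L²/α²)μ₀²). Then for every natural number k, setting μ = ρᵏμ₀, and for every real D with 0 ≤ D ≤ ρᵏ·α/(2τ), one has (1 + 2mτμ)D² − 2mαμD + m²μ²L² + τm³μ³L² ≤ (ρ^(k+1)·α/(2τ))². -/

import Mathlib

set_option maxHeartbeats 1000000

lemma aux_geo (α τ L M μ₀ p D : ℝ) (hα : 0 < α) (hτ : 0 < τ) (hL : 0 < L)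
    (hαL : α ≤ L) (hM : 1 ≤ M) (hμ₀ : 0 < μ₀)
    (hμ₀' : 5 * M * τ * L ^ 2 * μ₀ ≤ α ^ 2)
    (hp0 : 0 ≤ p) (hp1 : p ≤ 1) (hD0 : 0 ≤ D) (hD : D ≤ p * (α / (2 * τ))) :
    (1 + 2 * M * τ * (p * μ₀)) * D ^ 2 - 2 * M * α * (p * μ₀) * D
      + M ^ 2 * (p * μ₀) ^ 2 * L ^ 2 + τ * M ^ 3 * (p * μ₀) ^ 3 * L ^ 2
    ≤ (1 - 2 * M * τ * μ₀ + (5 * M ^ 2 * τ ^ 2 * L ^ 2 / α ^ 2) * μ₀ ^ 2)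
        * (p * (α / (2 * τ))) ^ 2 := by
  set μ : ℝ := p * μ₀ with hμdef
  set R : ℝ := p * (α / (2 * τ)) with hRdef
  have hR0 : 0 ≤ R := by positivity
  have hμnn : 0 ≤ μ := by positivity
  have hM0 : (0:ℝ) < M := lt_of_lt_of_le one_pos hM
  -- identity for RHS
  have hid : (1 - 2 * M * τ * μ₀ + (5 * M ^ 2 * τ ^ 2 * L ^ 2 / α ^ 2) * μ₀ ^ 2) * R ^ 2
      = R ^ 2 - M * α * μ * R + (5/4) * M ^ 2 * μ ^ 2 * L ^ 2 := by
    rw [hRdef, hμdef]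
    field_simp
    ring
  rw [hid]
  -- 5 M τ μ₀ ≤ 1
  have h5 : 5 * M * τ * μ₀ ≤ 1 := by
    nlinarith [mul_pos hL hL, sq_nonneg (α - L), mul_pos hα hα]
  have hμle : μ ≤ μ₀ := by nlinarith
  -- key small-step bound : M * τ * μ ≤ 1/5
  have hMτμ : M * τ * μ ≤ 1/5 := by nlinarith [mul_pos hM0 hτ]
  -- M * α * μ ≤ (2/5) * R
  have hMαμ : M * α * μ ≤ (2/5) * R := by
    rw [hμdef, hRdef]
    have : 5 * τ * (M * α * (p * μ₀)) ≤ 5 * τ * (2/5 * (p * (α / (2 * τ)))) := by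
      have hpa : 0 ≤ p * α := by positivity
      calc 5 * τ * (M * α * (p * μ₀)) = (p * α) * (5 * M * τ * μ₀) := by ring
        _ ≤ (p * α) * 1 := by nlinarith
        _ = 5 * τ * (2/5 * (p * (α / (2 * τ)))) := by field_simp
    exact (mul_le_mul_iff_right₀ (by positivity : (0:ℝ) < 5 * τ)).mp this
  -- D^2 ≤ R * D
  have hDsq : D ^ 2 ≤ R * D := by nlinarith
  -- identity: 2 M τ μ R = p * (M α μ)
  have hkey : 2 * M * τ * μ * R = p * (M * α * μ) := by
    rw [hμdef, hRdef]; field_simp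
  -- C = (1 + 2Mτμ) R - 2 M α μ
  rcases le_or_gt 0 ((1 + 2 * M * τ * μ) * R - 2 * M * α * μ) with hC | hC
  · -- g(D) ≤ D * C ≤ R * C
    have h1 : (1 + 2 * M * τ * μ) * D ^ 2 - 2 * M * α * μ * D
        ≤ (1 + 2 * M * τ * μ) * R ^ 2 - 2 * M * α * μ * R := by
      nlinarith [mul_le_mul_of_nonneg_left hDsq (by positivity : (0:ℝ) ≤ 1 + 2 * M * τ * μ),
        mul_le_mul_of_nonneg_right hD hC, mul_le_mul_of_nonneg_left hD hC]
    -- reduce to endpoint inequality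
    have h2 : (1 + 2 * M * τ * μ) * R ^ 2 - 2 * M * α * μ * R
        + M ^ 2 * μ ^ 2 * L ^ 2 + τ * M ^ 3 * μ ^ 3 * L ^ 2
        ≤ R ^ 2 - M * α * μ * R + (5/4) * M ^ 2 * μ ^ 2 * L ^ 2 := by
      have hML2 : 0 ≤ M ^ 2 * μ ^ 2 * L ^ 2 := by positivity
      have hMαμR : 0 ≤ M * α * μ * R := by positivity
      -- 2MτμR² - MαμR = MαμR (p - 1) ≤ 0
      have h3 : 2 * M * τ * μ * R ^ 2 ≤ M * α * μ * R := by
        have := mul_le_mul_of_nonneg_right (mul_le_mul_of_nonneg_right hp1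
          (by positivity : (0:ℝ) ≤ M * α * μ)) hR0
        nlinarith
      -- τ M³ μ³ L² ≤ (1/4) M² μ² L²
      have h4 : τ * M ^ 3 * μ ^ 3 * L ^ 2 ≤ (1/4) * M ^ 2 * μ ^ 2 * L ^ 2 := by
        nlinarith [mul_nonneg (mul_nonneg (sq_nonneg M) (sq_nonneg μ)) (sq_nonneg L)]
      nlinarith
    linarith
  · -- g(D) ≤ 0
    have h1 : (1 + 2 * M * τ * μ) * D ^ 2 - 2 * M * α * μ * D ≤ 0 := by
      nlinarith [mul_le_mul_of_nonneg_left hDsq (by positivity : (0:ℝ) ≤ 1 + 2 * M * τ * μ),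
        mul_le_mul_of_nonneg_right hC.le hD0]
    have h2 : M ^ 2 * μ ^ 2 * L ^ 2 + τ * M ^ 3 * μ ^ 3 * L ^ 2
        ≤ R ^ 2 - M * α * μ * R + (5/4) * M ^ 2 * μ ^ 2 * L ^ 2 := by
      have h4 : τ * M ^ 3 * μ ^ 3 * L ^ 2 ≤ (1/4) * M ^ 2 * μ ^ 2 * L ^ 2 := by
        nlinarith [mul_nonneg (mul_nonneg (sq_nonneg M) (sq_nonneg μ)) (sq_nonneg L)]
      have h5' : M * α * μ * R ≤ R ^ 2 := by nlinarith [mul_le_mul_of_nonneg_right hMαμ hR0]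
      linarith
    linarith

/-- Arithmetic induction step in the proof of Theorem 4.1: the per-cycle recursion with
geometrically diminishing stepsize preserves the linear-rate bound. -/
theorem geometric_stepsize_induction_step
    (α τ L : ℝ) (hα : 0 < α) (hτ : 0 < τ) (hL : 0 < L) (hαL : α ≤ L)
    (m : ℕ) (hm : 1 ≤ m)
    (μ₀ : ℝ) (hμ₀ : 0 < μ₀) (hμ₀' : μ₀ ≤ α ^ 2 / (5 * m * τ * L ^ 2))
    (ρ : ℝ)
    (hρ₁ : Real.sqrt (1 - 2 * m * τ * μ₀ + (5 * m ^ 2 * τ ^ 2 * L ^ 2 / α ^ 2) * μ₀ ^ 2) ≤ ρ)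
    (hρ₂ : ρ < 1) :
    ∀ k : ℕ, ∀ D : ℝ, 0 ≤ D → D ≤ ρ ^ k * (α / (2 * τ)) →
      (1 + 2 * m * τ * (ρ ^ k * μ₀)) * D ^ 2 - 2 * m * α * (ρ ^ k * μ₀) * D
          + m ^ 2 * (ρ ^ k * μ₀) ^ 2 * L ^ 2 + τ * m ^ 3 * (ρ ^ k * μ₀) ^ 3 * L ^ 2
        ≤ (ρ ^ (k + 1) * (α / (2 * τ))) ^ 2 := by
  intro k D hD0 hD1
  have hM : (1:ℝ) ≤ (m:ℝ) := by exact_mod_cast hm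
  have hM0 : (0:ℝ) < (m:ℝ) := lt_of_lt_of_le one_pos hM
  have hρ0 : 0 ≤ ρ := le_trans (Real.sqrt_nonneg _) hρ₁
  have hp0 : 0 ≤ ρ ^ k := by positivity
  have hp1 : ρ ^ k ≤ 1 := pow_le_one₀ hρ0 hρ₂.le
  have hμbd : 5 * (m:ℝ) * τ * L ^ 2 * μ₀ ≤ α ^ 2 := by
    rw [le_div_iff₀ (by positivity : (0:ℝ) < 5 * m * τ * L ^ 2)] at hμ₀'
    linarith
  -- nonnegativity of the argument of the square root
  have harg : 0 ≤ 1 - 2 * (m:ℝ) * τ * μ₀ + (5 * (m:ℝ) ^ 2 * τ ^ 2 * L ^ 2 / α ^ 2) * μ₀ ^ 2 := by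
    have hc : (m:ℝ) ^ 2 * τ ^ 2 ≤ 5 * (m:ℝ) ^ 2 * τ ^ 2 * L ^ 2 / α ^ 2 := by
      rw [le_div_iff₀ (by positivity : (0:ℝ) < α ^ 2)]
      have hα2 : α ^ 2 ≤ L ^ 2 := by nlinarith
      nlinarith [mul_le_mul_of_nonneg_left hα2 (by positivity : (0:ℝ) ≤ (m:ℝ) ^ 2 * τ ^ 2),
        mul_nonneg (mul_nonneg (sq_nonneg ((m:ℝ))) (sq_nonneg τ)) (sq_nonneg L)]
    nlinarith [sq_nonneg (1 - (m:ℝ) * τ * μ₀), mul_le_mul_of_nonneg_right hc (sq_nonneg μ₀)]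
  have hρsq : 1 - 2 * (m:ℝ) * τ * μ₀ + (5 * (m:ℝ) ^ 2 * τ ^ 2 * L ^ 2 / α ^ 2) * μ₀ ^ 2 ≤ ρ ^ 2 := by
    calc 1 - 2 * (m:ℝ) * τ * μ₀ + (5 * (m:ℝ) ^ 2 * τ ^ 2 * L ^ 2 / α ^ 2) * μ₀ ^ 2
        = Real.sqrt (1 - 2 * (m:ℝ) * τ * μ₀ + (5 * (m:ℝ) ^ 2 * τ ^ 2 * L ^ 2 / α ^ 2) * μ₀ ^ 2) ^ 2 :=
          (Real.sq_sqrt harg).symm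
      _ ≤ ρ ^ 2 := pow_le_pow_left₀ (Real.sqrt_nonneg _) hρ₁ 2
  have haux := aux_geo α τ L (m:ℝ) μ₀ (ρ ^ k) D hα hτ hL hαL hM hμ₀ hμbd hp0 hp1 hD0 hD1
  have hRHS : (1 - 2 * (m:ℝ) * τ * μ₀ + (5 * (m:ℝ) ^ 2 * τ ^ 2 * L ^ 2 / α ^ 2) * μ₀ ^ 2)
      * (ρ ^ k * (α / (2 * τ))) ^ 2 ≤ (ρ ^ (k + 1) * (α / (2 * τ))) ^ 2 := by
    have h1 : (ρ ^ (k + 1) * (α / (2 * τ))) ^ 2 = ρ ^ 2 * (ρ ^ k * (α / (2 * τ))) ^ 2 := by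
      ring
    rw [h1]
    exact mul_le_mul_of_nonneg_right hρsq (by positivity)
  linarith
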